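/- For every natural number n and every 0 ≤ i ≤ n, the following identity of polynomials in ℂ[u] holds: r^{n−i} s^{i} (1 − a r^{−i} s^{i−n} u)(1 − a r^{1−i} s^{i−n−1} u) + (r − s)[i+1][n−i] · a r^{−i} s^{i−n} u · (1 − a r^{1−i} s^{i−n−1} u) − (r − s)[i][n+1−i] · a r^{1−i} s^{i−n−1} u · (1 − a r^{−i} s^{i−n} u) = r^{n−i} s^{i} (1 − a r s^{−n−1} u)(1 − a r^{−n} u). -/

import Mathlib

/-- The two-parameter quantum integer `[m] = (r^m - s^m)/(r - s)`. -/
noncomputable def qint (r s : ℂ) (m : ℕ) : ℂ := (r ^ m - s ^ m) / (r - s)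

lemma aux_rat_id (r s a u x X y Y d : ℂ) (hx : x ≠ 0) (hX : X ≠ 0) (hy : y ≠ 0)
    (hY : Y ≠ 0) (hs : s ≠ 0) (hd0 : d ≠ 0) (hd2 : r - s = d) :
    X * y * (1 - a * x⁻¹ * Y⁻¹ * u) * (1 - a * (r * x⁻¹) * (Y * s)⁻¹ * u)
      + (r * x - s * y) * ((X - Y) / d) * (a * x⁻¹ * Y⁻¹ * u)
          * (1 - a * (r * x⁻¹) * (Y * s)⁻¹ * u)
      - (x - y) * ((r * X - s * Y) / d) * (a * (r * x⁻¹) * (Y * s)⁻¹ * u)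
          * (1 - a * x⁻¹ * Y⁻¹ * u)
    = X * y * (1 - a * r * (y * Y * s)⁻¹ * u) * (1 - a * (x * X)⁻¹ * u) := by
  have hD : d * x ^ 2 * Y ^ 2 * s ≠ 0 :=
    mul_ne_zero (mul_ne_zero (mul_ne_zero hd0 (pow_ne_zero _ hx)) (pow_ne_zero _ hY)) hs
  have hDR : x * X * y * Y * s ≠ 0 :=
    mul_ne_zero (mul_ne_zero (mul_ne_zero (mul_ne_zero hx hX) hy) hY) hs
  have i1 : a * (r * x⁻¹) * (Y * s)⁻¹ * u = a * r * u / (x * (Y * s)) := by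
    rw [div_eq_mul_inv, mul_inv]; ring
  have i2 : (1 : ℂ) - a * x⁻¹ * Y⁻¹ * u = (x * Y - a * u) / (x * Y) := by
    rw [eq_div_iff (mul_ne_zero hx hY), sub_mul, one_mul]
    congr 1
    field_simp
  have i3 : (1 : ℂ) - a * (r * x⁻¹) * (Y * s)⁻¹ * u
      = (x * (Y * s) - a * r * u) / (x * (Y * s)) := by
    rw [eq_div_iff (by simp [hx, hY, hs]), sub_mul, one_mul]
    congr 1
    field_simp
  have i4 : a * x⁻¹ * Y⁻¹ * u = a * u / (x * Y) := by
    rw [div_eq_mul_inv, mul_inv]; ring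
  have i5 : (1 : ℂ) - a * r * (y * Y * s)⁻¹ * u
      = (y * Y * s - a * r * u) / (y * Y * s) := by
    rw [eq_div_iff (by simp [hy, hY, hs]), sub_mul, one_mul]
    congr 1
    field_simp
  have i6 : (1 : ℂ) - a * (x * X)⁻¹ * u = (x * X - a * u) / (x * X) := by
    rw [eq_div_iff (by simp [hx, hX]), sub_mul, one_mul]
    congr 1
    field_simp
  have h0 : X * y * (1 - a * x⁻¹ * Y⁻¹ * u) * (1 - a * (r * x⁻¹) * (Y * s)⁻¹ * u)
      = d * X * y * (x * Y - a * u) * (x * (Y * s) - a * r * u) / (d * x ^ 2 * Y ^ 2 * s) := by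
    rw [i2, i3]
    simp only [mul_div_assoc', div_mul_eq_mul_div, div_div]
    rw [div_eq_div_iff (by simp [hx, hY, hs]) hD]
    ring
  have h1 : (r * x - s * y) * ((X - Y) / d) * (a * x⁻¹ * Y⁻¹ * u)
        * (1 - a * (r * x⁻¹) * (Y * s)⁻¹ * u)
      = (r * x - s * y) * (X - Y) * a * u * (x * (Y * s) - a * r * u)
          / (d * x ^ 2 * Y ^ 2 * s) := by
    rw [i4, i3]
    simp only [mul_div_assoc', div_mul_eq_mul_div, div_div]
    rw [div_eq_div_iff (by simp [hx, hY, hs, hd0]) hD]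
    ring
  have h2 : (x - y) * ((r * X - s * Y) / d) * (a * (r * x⁻¹) * (Y * s)⁻¹ * u)
        * (1 - a * x⁻¹ * Y⁻¹ * u)
      = (x - y) * (r * X - s * Y) * a * r * u * (x * Y - a * u)
          / (d * x ^ 2 * Y ^ 2 * s) := by
    rw [i1, i2]
    simp only [mul_div_assoc', div_mul_eq_mul_div, div_div]
    rw [div_eq_div_iff (by simp [hx, hY, hs, hd0]) hD]
    ring
  have hR : X * y * (1 - a * r * (y * Y * s)⁻¹ * u) * (1 - a * (x * X)⁻¹ * u)
      = X * y * (y * Y * s - a * r * u) * (x * X - a * u) / (x * X * y * Y * s) := by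
    rw [i5, i6]
    simp only [mul_div_assoc', div_mul_eq_mul_div, div_div]
    rw [div_eq_div_iff (by simp [hx, hX, hy, hY, hs]) hDR]
    ring
  rw [h0, h1, h2, hR, ← add_div, ← sub_div, div_eq_div_iff hD hDR]
  subst hd2
  ring

set_option maxHeartbeats 1000000 in
/-- For every `n` and `0 ≤ i ≤ n`, the identity of polynomials in `ℂ[u]`:
`r^{n−i} s^i (1 − a r^{−i} s^{i−n} u)(1 − a r^{1−i} s^{i−n−1} u)
 + (r−s)[i+1][n−i]·a r^{−i} s^{i−n} u·(1 − a r^{1−i} s^{i−n−1} u)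
 − (r−s)[i][n+1−i]·a r^{1−i} s^{i−n−1} u·(1 − a r^{−i} s^{i−n} u)
 = r^{n−i} s^i (1 − a r s^{−n−1} u)(1 − a r^{−n} u)`. -/
theorem eigenvalue_rational_identity (r s a : ℂ) (hr : r ≠ 0) (hs : s ≠ 0) (ha : a ≠ 0)
    (hrs : r ≠ s) (n i : ℕ) (hi : i ≤ n) (u : ℂ) :
    r ^ ((n : ℤ) - (i : ℤ)) * s ^ (i : ℕ)
        * (1 - a * r ^ (-(i : ℤ)) * s ^ ((i : ℤ) - (n : ℤ)) * u)
        * (1 - a * r ^ ((1 : ℤ) - (i : ℤ)) * s ^ ((i : ℤ) - (n : ℤ) - 1) * u)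
      + (r - s) * qint r s (i + 1) * qint r s (n - i)
        * (a * r ^ (-(i : ℤ)) * s ^ ((i : ℤ) - (n : ℤ)) * u)
        * (1 - a * r ^ ((1 : ℤ) - (i : ℤ)) * s ^ ((i : ℤ) - (n : ℤ) - 1) * u)
      - (r - s) * qint r s i * qint r s (n + 1 - i)
        * (a * r ^ ((1 : ℤ) - (i : ℤ)) * s ^ ((i : ℤ) - (n : ℤ) - 1) * u)
        * (1 - a * r ^ (-(i : ℤ)) * s ^ ((i : ℤ) - (n : ℤ)) * u)
    = r ^ ((n : ℤ) - (i : ℤ)) * s ^ (i : ℕ)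
        * (1 - a * r * s ^ (-(n : ℤ) - 1) * u) * (1 - a * r ^ (-(n : ℤ)) * u) := by
  obtain ⟨j, rfl⟩ : ∃ j, n = i + j := ⟨n - i, (Nat.add_sub_cancel' hi).symm⟩
  have hrs' : r - s ≠ 0 := sub_ne_zero.mpr hrs
  have e1 : ((i : ℤ) + j - i) = (j : ℤ) := by ring
  have e2 : ((i : ℤ) - (i + j)) = -(j : ℤ) := by ring
  have e3 : i + j - i = j := by omega
  have e4 : i + j + 1 - i = j + 1 := by omega
  have A : r ^ (-(i:ℤ)) = (r^i)⁻¹ := by rw [zpow_neg, zpow_natCast]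
  have B : s ^ (-(j:ℤ)) = (s^j)⁻¹ := by rw [zpow_neg, zpow_natCast]
  have C : r ^ ((1:ℤ)-(i:ℤ)) = r * (r^i)⁻¹ := by
    rw [zpow_sub₀ hr, zpow_one, zpow_natCast, div_eq_mul_inv]
  have D : s ^ (-(j:ℤ)-1) = (s^j * s)⁻¹ := by
    rw [show -(j:ℤ)-1 = -((j:ℤ)+1) by ring, zpow_neg, zpow_add_one₀ hs, zpow_natCast]
  have E : s ^ (-((i:ℤ)+(j:ℤ))-1) = (s^i * s^j * s)⁻¹ := by
    rw [show -((i:ℤ)+(j:ℤ))-1 = -(((i:ℤ)+(j:ℤ))+1) by ring, zpow_neg, zpow_add_one₀ hs,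
      zpow_add₀ hs, zpow_natCast, zpow_natCast]
  have F : r ^ (-((i:ℤ)+(j:ℤ))) = (r^i * r^j)⁻¹ := by
    rw [zpow_neg, zpow_add₀ hr, zpow_natCast, zpow_natCast]
  have q1 : (r - s) * qint r s (i + 1) = r ^ (i + 1) - s ^ (i + 1) := mul_div_cancel₀ _ hrs'
  have q2 : (r - s) * qint r s i = r ^ i - s ^ i := mul_div_cancel₀ _ hrs'
  simp only [Nat.cast_add, e1, e2, e3, e4]
  rw [q1, q2]
  simp only [qint, A, B, C, D, E, F, zpow_natCast, pow_succ]
  have hx : (r:ℂ) ^ i ≠ 0 := pow_ne_zero _ hr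
  have hX : (r:ℂ) ^ j ≠ 0 := pow_ne_zero _ hr
  have hy : (s:ℂ) ^ i ≠ 0 := pow_ne_zero _ hs
  have hY : (s:ℂ) ^ j ≠ 0 := pow_ne_zero _ hs
  linear_combination aux_rat_id r s a u (r^i) (r^j) (s^i) (s^j) (r-s) hx hX hy hY hs hrs' rfl
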